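/- Let A be an integral domain, finitely generated as a ℂ-algebra, which is integrally closed in its field of fractions, and let ∂ be a locally nilpotent ℂ-derivation of A. Then the kernel B = ker ∂ is an integral domain which is integrally closed in its own field of fractions. -/

import Mathlib

/-- The kernel `B = ker ∂` of a ℂ-derivation `∂ : A → A`, as a ℂ-subalgebra of `A`. -/
def Derivation.kerSubalgebra {A : Type} [CommRing A] [Algebra ℂ A]
    (D : Derivation ℂ A A) : Subalgebra ℂ A where
  carrier := {a | D a = 0}
  mul_mem' := by
    intro a b ha hb
    simp only [Set.mem_setOf_eq] at *
    rw [D.leibniz, ha, hb, smul_zero, smul_zero, add_zero]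
  one_mem' := by
    simp only [Set.mem_setOf_eq, Derivation.map_one_eq_zero]
  add_mem' := by
    intro a b ha hb
    simp only [Set.mem_setOf_eq] at *
    rw [map_add, ha, hb, add_zero]
  zero_mem' := by simp only [Set.mem_setOf_eq, map_zero]
  algebraMap_mem' := by
    intro r
    simp only [Set.mem_setOf_eq, Derivation.map_algebraMap]

open Finset

private lemma DKS.pascal_sum {M : Type} [AddCommMonoid M] (m : ℕ) (t : ℕ → M) :
    ∑ k ∈ range (m+2), (m+1).choose k • t k
      = ∑ k ∈ range (m+1), m.choose k • t k + ∑ k ∈ range (m+1), m.choose k • t (k+1) := by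
  rw [Finset.sum_range_succ' _ (m+1)]
  simp only [Nat.choose_succ_succ, Nat.succ_eq_add_one, add_smul, Finset.sum_add_distrib,
    Nat.choose_zero_right, one_smul]
  rw [Finset.sum_range_succ (fun x => m.choose (x+1) • t (x+1)) m, Nat.choose_succ_self,
    zero_smul, add_zero, Finset.sum_range_succ' (fun k => m.choose k • t k) m,
    Nat.choose_zero_right, one_smul]
  abel

section

variable {A : Type} [CommRing A] [Algebra ℂ A] (D : Derivation ℂ A A)

private lemma DKS.iter_zero (m : ℕ) : (⇑D)^[m] 0 = 0 :=
  Function.iterate_fixed (map_zero D) m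

private lemma DKS.iter_add (m : ℕ) (x y : A) :
    (⇑D)^[m] (x+y) = (⇑D)^[m] x + (⇑D)^[m] y := by
  induction m generalizing x y with
  | zero => simp
  | succ m ih =>
      rw [Function.iterate_succ_apply', ih, map_add, Function.iterate_succ_apply',
        Function.iterate_succ_apply']

private lemma DKS.iter_sum (m : ℕ) {ι : Type} (s : Finset ι) (f : ι → A) :
    (⇑D)^[m] (∑ i ∈ s, f i) = ∑ i ∈ s, (⇑D)^[m] (f i) := by
  classical
  induction s using Finset.induction_on with
  | empty => simp [DKS.iter_zero]
  | insert _ _ h ih => rw [Finset.sum_insert h, Finset.sum_insert h, DKS.iter_add, ih]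

private theorem DKS.iterate_leibniz (m : ℕ) (a b : A) :
    (⇑D)^[m] (a*b) = ∑ k ∈ Finset.range (m+1),
      m.choose k • ((⇑D)^[k] a * (⇑D)^[m-k] b) := by
  induction m generalizing a b with
  | zero => simp
  | succ m ih =>
      rw [Function.iterate_succ_apply, D.leibniz, smul_eq_mul, smul_eq_mul, DKS.iter_add,
        ih, mul_comm b (D a), ih, DKS.pascal_sum m
          (fun k => (⇑D)^[k] a * (⇑D)^[m+1-k] b)]
      congr 1
      · apply Finset.sum_congr rfl
        intro k hk
        simp only [Finset.mem_range] at hk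
        have h1 : (⇑D)^[m-k] (D b) = (⇑D)^[m+1-k] b := by
          rw [← Function.iterate_succ_apply D (m-k) b]
          congr 1
          omega
        rw [h1]
      · apply Finset.sum_congr rfl
        intro k _
        have h1 : (⇑D)^[k] (D a) = (⇑D)^[k+1] a := by
          rw [← Function.iterate_succ_apply D k a]
        have h2 : (⇑D)^[m-k] b = (⇑D)^[m+1-(k+1)] b := by
          congr 1
          omega
        rw [h1, h2]

/-- `x` has degree at most `p` with respect to the derivation. -/
private def DKS.Bnd (x : A) (p : ℕ) : Prop := ∀ m, p < m → (⇑D)^[m] x = 0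

private lemma DKS.bnd_of_iterate_eq_zero {x : A} {n : ℕ} (h : (⇑D)^[n] x = 0) :
    DKS.Bnd D x (n - 1) := by
  intro m hm
  obtain ⟨k, rfl⟩ : ∃ k, m = n + k := ⟨m - n, by omega⟩
  rw [add_comm, Function.iterate_add_apply, h, DKS.iter_zero]

private lemma DKS.bnd_ker {c : A} (hc : D c = 0) : DKS.Bnd D c 0 := by
  apply DKS.bnd_of_iterate_eq_zero (n := 1)
  simpa using hc

private lemma DKS.bnd_mul {x y : A} {p q : ℕ} (hx : DKS.Bnd D x p) (hy : DKS.Bnd D y q) :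
    DKS.Bnd D (x*y) (p+q) := by
  intro m hm
  rw [DKS.iterate_leibniz]
  apply Finset.sum_eq_zero
  intro k hk
  simp only [Finset.mem_range] at hk
  rcases le_or_gt k p with h | h
  · rw [hy (m-k) (by omega), mul_zero, smul_zero]
  · rw [hx k h, zero_mul, smul_zero]

private lemma DKS.bnd_pow {x : A} {p : ℕ} (hx : DKS.Bnd D x p) (i : ℕ) :
    DKS.Bnd D (x^i) (i*p) := by
  induction i with
  | zero =>
      rw [pow_zero, zero_mul]
      exact DKS.bnd_ker D (Derivation.map_one_eq_zero D)
  | succ i ih =>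
      rw [pow_succ]
      have := DKS.bnd_mul D ih hx
      have he : i * p + p = (i+1) * p := by ring
      rwa [he] at this

private lemma DKS.lead_mul {x y : A} {p q : ℕ} (hx : DKS.Bnd D x p) (hy : DKS.Bnd D y q) :
    (⇑D)^[p+q] (x*y) = ((p+q).choose p) • ((⇑D)^[p] x * (⇑D)^[q] y) := by
  rw [DKS.iterate_leibniz]
  rw [Finset.sum_eq_single p]
  · have h : p + q - p = q := by omega
    rw [h]
  · intro k hk hne
    simp only [Finset.mem_range] at hk
    rcases lt_or_gt_of_ne hne with h | h
    · rw [hy (p+q-k) (by omega), mul_zero, smul_zero]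
    · rw [hx k h, zero_mul, smul_zero]
  · intro h
    exact absurd (Finset.mem_range.mpr (by omega)) h

private lemma DKS.lead_pow {x : A} {p : ℕ} (hx : DKS.Bnd D x p) (n : ℕ) :
    ∃ K : ℕ, 0 < K ∧ (⇑D)^[n*p] (x^n) = K • ((⇑D)^[p] x)^n := by
  induction n with
  | zero => exact ⟨1, Nat.one_pos, by simp⟩
  | succ n ih =>
      obtain ⟨K, hK, h⟩ := ih
      refine ⟨(n*p+p).choose (n*p) * K, Nat.mul_pos (Nat.choose_pos (by omega)) hK, ?_⟩
      have he : (n+1) * p = n*p + p := by ring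
      rw [pow_succ, he, DKS.lead_mul D (DKS.bnd_pow D hx n) hx, h, pow_succ,
        smul_mul_assoc, smul_smul]

/-- Key lemma: the kernel of a locally nilpotent derivation is integrally closed in `A`. -/
private lemma DKS.key [IsDomain A] (hLND : ∀ a : A, ∃ n : ℕ, (⇑D)^[n] a = 0) (a : A)
    (p : Polynomial ↥(D.kerSubalgebra)) (hmon : p.Monic)
    (hp : Polynomial.eval₂ (algebraMap ↥(D.kerSubalgebra) A) a p = 0) : D a = 0 := by
  classical
  haveI : CharZero A := charZero_of_injective_algebraMap (algebraMap ℂ A).injective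
  by_contra hDa
  -- the degree `d ≥ 1` of `a`
  have hfind := Nat.find_spec (hLND a)
  set N := Nat.find (hLND a) with hN
  have hN2 : 2 ≤ N := by
    by_contra hc
    push_neg at hc
    interval_cases N
    · exact hDa (by rw [show a = 0 from hfind]; exact map_zero D)
    · exact hDa (by simpa using hfind)
  set d := N - 1 with hd
  have hd1 : 1 ≤ d := by omega
  have hdne : (⇑D)^[d] a ≠ 0 := Nat.find_min (hLND a) (by omega)
  have hbnd : DKS.Bnd D a d := by
    have := DKS.bnd_of_iterate_eq_zero D hfind
    intro m hm
    exact this m (by omega)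
  -- the degree `n ≥ 1` of the polynomial
  set n := p.natDegree with hn
  have hn1 : 1 ≤ n := by
    by_contra hc
    push_neg at hc
    have : p = 1 := (hmon.natDegree_eq_zero).mp (by omega)
    rw [this, Polynomial.eval₂_one] at hp
    exact one_ne_zero hp
  rw [Polynomial.eval₂_eq_sum_range] at hp
  have h0 := congrArg ((⇑D)^[n*d]) hp
  rw [DKS.iter_sum, DKS.iter_zero] at h0
  rw [Finset.sum_eq_single n] at h0
  · -- leading term is nonzero
    obtain ⟨K, hK, hlead⟩ := DKS.lead_pow D hbnd n
    rw [hmon.coeff_natDegree] at h0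
    simp only [map_one, one_mul] at h0
    rw [hlead, nsmul_eq_mul] at h0
    rcases mul_eq_zero.mp h0 with h | h
    · exact absurd h (Nat.cast_ne_zero.mpr (by omega))
    · exact hdne (pow_eq_zero_iff (by omega : n ≠ 0) |>.mp h)
  · intro i hi hne
    simp only [Finset.mem_range] at hi
    have hic : D ↑(p.coeff i) = 0 := (p.coeff i).property
    have hb : DKS.Bnd D ((algebraMap ↥(D.kerSubalgebra) A) (p.coeff i) * a ^ i) (0 + i * d) :=
      DKS.bnd_mul D (DKS.bnd_ker D hic) (DKS.bnd_pow D hbnd i)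
    apply hb
    have : i < n := by omega
    calc 0 + i * d = i * d := by ring
    _ < n * d := by
        apply Nat.mul_lt_mul_of_lt_of_le this (le_refl d) (by omega)
  · intro h
    exact absurd (Finset.mem_range.mpr (by omega)) h

end

/-- normality assertion in Theorem 2.16(b). Let `A` be an integral
domain, finitely generated as a ℂ-algebra, which is integrally closed in its field of
fractions, and let `∂` be a locally nilpotent ℂ-derivation of `A`. Then the kernel
`B = ker ∂` is an integral domain which is integrally closed in its own field of
fractions. -/
theorem kernel_of_locallyNilpotentDerivation_integrallyClosed
    (A : Type) [CommRing A] [IsDomain A] [Algebra ℂ A] [Algebra.FiniteType ℂ A]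
    [IsIntegrallyClosed A]
    (D : Derivation ℂ A A)
    (hLND : ∀ a : A, ∃ n : ℕ, (⇑D)^[n] a = 0) :
    IsDomain ↥(D.kerSubalgebra) ∧ IsIntegrallyClosed ↥(D.kerSubalgebra) := by
  refine ⟨inferInstance, ?_⟩
  set B := D.kerSubalgebra with hB
  rw [isIntegrallyClosed_iff (FractionRing ↥B)]
  intro x hx
  set K := FractionRing A
  set f : ↥B →+* K := (algebraMap A K).comp (algebraMap ↥B A) with hf
  have hfinj : Function.Injective f :=
    (IsFractionRing.injective A K).comp Subtype.val_injective
  set g : FractionRing ↥B →+* K := IsFractionRing.lift hfinj with hg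
  have hgalg : ∀ b : ↥B, g (algebraMap ↥B (FractionRing ↥B) b) = f b :=
    fun b => IsFractionRing.lift_algebraMap hfinj b
  have hcomp : g.comp (algebraMap ↥B (FractionRing ↥B)) = f :=
    RingHom.ext fun b => hgalg b
  obtain ⟨p, hmon, hp⟩ := hx
  -- `g x` is integral over `A`
  have hgx : Polynomial.eval₂ f (g x) p = 0 := by
    have h1 := Polynomial.hom_eval₂ p (algebraMap ↥B (FractionRing ↥B)) g x
    rw [hp, map_zero, hcomp] at h1
    exact h1.symm
  have hint : IsIntegral A (g x) := by
    refine ⟨p.map (algebraMap ↥B A), hmon.map _, ?_⟩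
    rw [Polynomial.eval₂_map]
    exact hgx
  obtain ⟨a, ha⟩ := IsIntegrallyClosed.isIntegral_iff.mp hint
  -- `a` is integral over `B`, hence lies in `B`
  have heval : Polynomial.eval₂ (algebraMap ↥B A) a p = 0 := by
    apply IsFractionRing.injective A K
    rw [map_zero]
    have h2 := Polynomial.hom_eval₂ p (algebraMap ↥B A) (algebraMap A K) a
    rw [h2, ha]
    exact hgx
  have hmem : a ∈ B := DKS.key D hLND a p hmon heval
  refine ⟨⟨a, hmem⟩, ?_⟩
  apply g.injective
  rw [hgalg]
  exact ha
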